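/- Let (S,+) be an infinite left weakly cancellative semigroup with no idempotent, and let A be an IP set in S. Then there is a family ⟨A_α⟩_{α < 2^{ℵ₀}} of 2^{ℵ₀} subsets of A such that each A_α is a countably infinite IP set in S and A_α ∩ A_β is finite whenever α ≠ β. -/

import Mathlib

/-- Sum of `x` over the finite set `H ⊆ ℕ`, taken in increasing order of indices
(with junk value `x 0` when `H = ∅`). -/
def ordSum {S : Type*} [Add S] (x : ℕ → S) (H : Finset ℕ) : S :=
  match H.sort (· ≤ ·) with
  | [] => x 0
  | h :: t => t.foldl (fun s n => s + x n) (x h)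

/-- `FS(⟨x_n⟩) = {∑_{n ∈ H} x_n : H a nonempty finite subset of ℕ}`,
sums in increasing order of indices. -/
def FS {S : Type*} [Add S] (x : ℕ → S) : Set S :=
  {s | ∃ H : Finset ℕ, H.Nonempty ∧ s = ordSum x H}

/-- `A` is an IP set if `FS(⟨x_n⟩) ⊆ A` for some sequence `⟨x_n⟩` in `S`. -/
def IPSet {S : Type*} [Add S] (A : Set S) : Prop :=
  ∃ x : ℕ → S, FS x ⊆ A

open Filter

attribute [local instance] Ultrafilter.add Ultrafilter.addSemigroup

section OrdSum

variable {S : Type*} [AddSemigroup S] (x : ℕ → S)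

private lemma foldl_add_assoc (a b : S) (l : List ℕ) :
    l.foldl (fun s n => s + x n) (a + b) = a + l.foldl (fun s n => s + x n) b := by
  induction l generalizing b with
  | nil => rfl
  | cons h t ih => simpa [add_assoc] using ih (b + x h)

private lemma ordSum_singleton (n : ℕ) : ordSum x {n} = x n := by
  simp [ordSum, Finset.sort_singleton]

private lemma ordSum_insert_min {n : ℕ} {H : Finset ℕ} (hne : H.Nonempty)
    (hn : ∀ m ∈ H, n < m) :
    ordSum x (insert n H) = x n + ordSum x H := by
  have hnot : n ∉ H := fun h => lt_irrefl n (hn n h)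
  have hsort : (insert n H).sort (· ≤ ·) = n :: H.sort (· ≤ ·) :=
    Finset.sort_insert _ (fun b hb => (hn b hb).le) hnot
  obtain ⟨h, t, ht⟩ : ∃ h t, H.sort (· ≤ ·) = h :: t := by
    rcases hs : H.sort (· ≤ ·) with _ | ⟨h, t⟩
    · exfalso
      have := Finset.length_sort (α := ℕ) (· ≤ ·) (s := H)
      rw [hs] at this
      simp at this
      exact hne.ne_empty (Finset.card_eq_zero.mp this.symm)
    · exact ⟨h, t, rfl⟩
  rw [ordSum, hsort, ht]
  show t.foldl (fun s n => s + x n) (x n + x h) = x n + ordSum x H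
  rw [foldl_add_assoc, ordSum, ht]

private lemma min_lt_of_mem_erase {H : Finset ℕ} (hne : H.Nonempty) {m : ℕ}
    (hm : m ∈ H.erase (H.min' hne)) : H.min' hne < m := by
  rcases Finset.mem_erase.mp hm with ⟨hne', hmH⟩
  exact lt_of_le_of_ne (H.min'_le m hmH) (Ne.symm hne')

private lemma ordSum_min_split {H : Finset ℕ} (hne : H.Nonempty)
    (hee : (H.erase (H.min' hne)).Nonempty) :
    ordSum x H = x (H.min' hne) + ordSum x (H.erase (H.min' hne)) := by
  conv_lhs => rw [← Finset.insert_erase (H.min'_mem hne)]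
  exact ordSum_insert_min x hee (fun m hm => min_lt_of_mem_erase hne hm)

private lemma ordSum_insert_max : ∀ (H : Finset ℕ), H.Nonempty → ∀ n, (∀ m ∈ H, m < n) →
    ordSum x (insert n H) = ordSum x H + x n := by
  intro H
  induction H using Finset.strongInduction with
  | _ H ih =>
    intro hne n hn
    set a := H.min' hne with ha
    have haH : a ∈ H := H.min'_mem hne
    have han : a < n := hn a haH
    by_cases he : H.erase a = ∅
    · have hH : H = {a} := by
        apply Finset.eq_singleton_iff_unique_mem.mpr
        refine ⟨haH, fun b hb => ?_⟩
        by_contra hba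
        exact (Finset.ne_empty_of_mem (Finset.mem_erase.mpr ⟨hba, hb⟩)) he
      rw [hH]
      rw [show insert n {a} = insert a ({n} : Finset ℕ) by
        ext i; simp [or_comm]]
      rw [ordSum_insert_min x (Finset.singleton_nonempty n)
        (by intro m hm; rw [Finset.mem_singleton] at hm; subst hm; exact han),
        ordSum_singleton, ordSum_singleton]
    · have hee : (H.erase a).Nonempty := Finset.nonempty_iff_ne_empty.mpr he
      have hkey : insert n H = insert a (insert n (H.erase a)) := by
        rw [← Finset.insert_erase haH, Finset.insert_comm]
        rw [Finset.insert_erase haH]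
      rw [hkey, ordSum_insert_min x (Finset.insert_nonempty n _)
        (by intro m hm
            rcases Finset.mem_insert.mp hm with rfl | hm
            · exact han
            · exact min_lt_of_mem_erase hne hm),
        ih (H.erase a) (Finset.erase_ssubset haH) hee n
          (fun m hm => hn m (Finset.mem_of_mem_erase hm)),
        ← add_assoc, ← ordSum_min_split x hne hee]

private lemma ordSum_image {g : ℕ → ℕ} (hg : StrictMono g) :
    ∀ (H : Finset ℕ), H.Nonempty →
      ordSum (fun n => x (g n)) H = ordSum x (H.image g) := by
  intro H
  induction H using Finset.strongInduction with
  | _ H ih =>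
    intro hne
    set a := H.min' hne with ha
    have haH : a ∈ H := H.min'_mem hne
    by_cases he : H.erase a = ∅
    · have hH : H = {a} := by
        apply Finset.eq_singleton_iff_unique_mem.mpr
        refine ⟨haH, fun b hb => ?_⟩
        by_contra hba
        exact (Finset.ne_empty_of_mem (Finset.mem_erase.mpr ⟨hba, hb⟩)) he
      rw [hH]
      rw [Finset.image_singleton, ordSum_singleton, ordSum_singleton]
    · have hee : (H.erase a).Nonempty := Finset.nonempty_iff_ne_empty.mpr he
      rw [ordSum_min_split _ hne hee,
        ih (H.erase a) (Finset.erase_ssubset haH) hee]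
      have himg : H.image g = insert (g a) ((H.erase a).image g) := by
        conv_lhs => rw [← Finset.insert_erase haH]
        exact Finset.image_insert g a (H.erase a)
      rw [himg, ordSum_insert_min x (hee.image g)]
      intro m hm
      rcases Finset.mem_image.mp hm with ⟨b, hb, rfl⟩
      exact hg (min_lt_of_mem_erase hne hb)

end OrdSum

section Bridge

variable {S : Type*} [AddSemigroup S]

private lemma hindmanFS_drop_sub (x : ℕ → S) :
    ∀ (a : Stream' S) (m : S), m ∈ Hindman.FS a → ∀ k, a = Stream'.drop k x →
      ∃ H : Finset ℕ, H.Nonempty ∧ (∀ i ∈ H, k ≤ i) ∧ m = ordSum x H := by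
  intro a m hm
  induction hm with
  | head' a =>
    rintro k rfl
    exact ⟨{k}, Finset.singleton_nonempty k, by simp,
      by rw [ordSum_singleton]; exact (Stream'.head_drop x k)⟩
  | tail' a m h ih =>
    rintro k rfl
    obtain ⟨H, hne, hb, heq⟩ := ih (k + 1) (Stream'.tail_drop' (s := (x : Stream' S)))
    exact ⟨H, hne, fun i hi => (Nat.le_succ k).trans (hb i hi), heq⟩
  | cons' a m h ih =>
    rintro k rfl
    obtain ⟨H, hne, hb, heq⟩ := ih (k + 1) (Stream'.tail_drop' (s := (x : Stream' S)))
    refine ⟨insert k H, Finset.insert_nonempty k H, ?_, ?_⟩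
    · intro i hi
      rcases Finset.mem_insert.mp hi with h | hi
      · exact h.ge
      · exact (Nat.le_succ k).trans (hb i hi)
    · rw [ordSum_insert_min x hne (fun i hi => Nat.lt_of_succ_le (hb i hi)), ← heq]
      congr 1
      exact Stream'.head_drop x k

private lemma hindmanFS_sub_FS (x : ℕ → S) : Hindman.FS (x : Stream' S) ⊆ FS x := by
  intro m hm
  obtain ⟨H, hne, _, heq⟩ := hindmanFS_drop_sub x x m hm 0 rfl
  exact ⟨H, hne, heq⟩

end Bridge

section UF

variable {S : Type*} [AddSemigroup S] (U : Ultrafilter S)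

private lemma mem_add_uf {B : Set S} {V W : Ultrafilter S} :
    B ∈ V + W ↔ {s | {t | s + t ∈ B} ∈ W} ∈ V := by
  have := Ultrafilter.eventually_add V W (· ∈ B)
  simpa [Filter.Eventually] using this

private lemma ufStar_mem (hU : U + U = U) {B : Set S} (hB : B ∈ U) :
    (B ∩ {s | {t | s + t ∈ B} ∈ U}) ∈ U := by
  refine Filter.inter_mem hB ?_
  have : B ∈ U + U := by rw [hU]; exact hB
  exact mem_add_uf.mp this

private lemma ufStar_star (hU : U + U = U) {B : Set S} {s : S}
    (hs : s ∈ B ∩ {s | {t | s + t ∈ B} ∈ U}) :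
    {t | s + t ∈ B ∩ {s | {t | s + t ∈ B} ∈ U}} ∈ U := by
  obtain ⟨hs1, hs2⟩ := hs
  have h1 : {t | s + t ∈ B} ∈ U := hs2
  have h2 : {t | s + t ∈ B} ∈ U + U := by rw [hU]; exact h1
  have h3 : {t | {t' | s + (t + t') ∈ B} ∈ U} ∈ U := mem_add_uf.mp h2
  have h4 : {t | {t' | (s + t) + t' ∈ B} ∈ U} ∈ U := by
    convert h3 using 2 with t
    simp [add_assoc]
  filter_upwards [h1, h4] with t ht1 ht4
  exact ⟨ht1, ht4⟩

private lemma mem_uf_infinite (hU : U + U = U) (hni : ∀ s : S, s + s ≠ s) {B : Set S}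
    (hB : B ∈ U) : B.Infinite := by
  by_contra hfin
  rw [Set.not_infinite] at hfin
  obtain ⟨a, -, ha⟩ := U.eq_pure_of_finite_mem hfin hB
  have hpp : (pure a + pure a : Ultrafilter S) = pure a := by rw [← ha, hU]
  have h1 : ({a + a} : Set S) ∈ (pure a + pure a : Ultrafilter S) := by
    rw [mem_add_uf]
    simp
  rw [hpp] at h1
  have : a + a ∈ ({a + a} : Set S) → a + a = a := by
    intro _
    have := Ultrafilter.mem_pure.mp h1
    exact (by simpa using this : a = a + a).symm
  exact hni a (this rfl)

end UF

noncomputable section Fam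
open scoped Classical

/-- The finset encoding the first `n` "bits" of `α : Set ℕ`, tagged with `n+1`. -/
private noncomputable def famSet (α : Set ℕ) (n : ℕ) : Finset ℕ :=
  insert (n+1) ((Finset.range n).filter (· ∈ α))

/-- A continuum-sized almost disjoint family of strictly increasing maps `ℕ → ℕ`. -/
private noncomputable def fam (α : Set ℕ) (n : ℕ) : ℕ := ∑ i ∈ famSet α n, 2 ^ i

private lemma famSet_subset (α : Set ℕ) (n : ℕ) : famSet α n ⊆ Finset.range (n+2) := by
  intro i hi
  rcases Finset.mem_insert.mp hi with rfl | hi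
  · exact Finset.mem_range.mpr (by omega)
  · exact Finset.mem_range.mpr (by
      have := Finset.mem_range.mp (Finset.mem_filter.mp hi).1
      omega)

private lemma fam_lb (α : Set ℕ) (n : ℕ) : 2 ^ (n+1) ≤ fam α n :=
  Finset.single_le_sum (f := fun i => 2 ^ i) (fun i _ => Nat.zero_le _)
    (Finset.mem_insert_self _ _)

private lemma fam_ub (α : Set ℕ) (n : ℕ) : fam α n < 2 ^ (n+2) := by
  calc fam α n ≤ ∑ i ∈ Finset.range (n+2), 2 ^ i :=
        Finset.sum_le_sum_of_subset (famSet_subset α n)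
    _ < 2 ^ (n+2) := by
        rw [Nat.geomSum_eq (le_refl 2)]
        have h : 1 ≤ 2 ^ (n+2) := Nat.one_le_two_pow
        simp only [show 2 - 1 = 1 from rfl, Nat.div_one]
        omega

private lemma fam_strictMono (α : Set ℕ) : StrictMono (fam α) := by
  apply strictMono_nat_of_lt_succ
  intro n
  calc fam α n < 2 ^ (n+2) := fam_ub α n
    _ ≤ fam α (n+1) := fam_lb α (n+1)

private lemma fam_eq_iff {α β : Set ℕ} {n m : ℕ} (h : fam α n = fam β m) :
    n = m ∧ (Finset.range n).filter (· ∈ α) = (Finset.range n).filter (· ∈ β) := by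
  have hnm : n = m := by
    have h1 := fam_lb α n
    have h2 := fam_ub α n
    have h3 := fam_lb β m
    have h4 := fam_ub β m
    rw [h] at h1 h2
    by_contra hne
    rcases Nat.lt_or_ge n m with hl | hl
    · have : 2 ^ (n+2) ≤ 2 ^ (m+1) := Nat.pow_le_pow_right (by norm_num) (by omega)
      omega
    · have : 2 ^ (m+2) ≤ 2 ^ (n+1) := Nat.pow_le_pow_right (by norm_num) (by omega)
      omega
  subst hnm
  have hsets : famSet α n = famSet β n := Finset.geomSum_injective (le_refl 2) h
  refine ⟨rfl, ?_⟩
  have hni : ∀ γ : Set ℕ, (n+1) ∉ (Finset.range n).filter (· ∈ γ) := by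
    intro γ hc
    have := Finset.mem_range.mp (Finset.mem_filter.mp hc).1
    omega
  have := congrArg (fun T => T.erase (n+1)) hsets
  simpa [famSet, Finset.erase_insert_of_ne, Finset.erase_eq_of_notMem (hni α),
    Finset.erase_insert (hni α), Finset.erase_insert (hni β)] using this

private lemma fam_almost_disjoint {α β : Set ℕ} (hab : α ≠ β) :
    (Set.range (fam α) ∩ Set.range (fam β)).Finite := by
  obtain ⟨k, hk⟩ : ∃ k, ¬(k ∈ α ↔ k ∈ β) := by
    by_contra hc
    push_neg at hc
    exact hab (Set.ext fun k => hc k)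
  apply Set.Finite.subset (Set.Finite.image (fam α) (Set.finite_Iic k))
  rintro v ⟨⟨n, rfl⟩, ⟨m, hm⟩⟩
  obtain ⟨rfl, hfil⟩ := fam_eq_iff hm.symm
  refine ⟨n, ?_, rfl⟩
  simp only [Set.mem_Iic]
  by_contra hn
  push_neg at hn
  have hkr : k ∈ Finset.range n := Finset.mem_range.mpr hn
  apply hk
  constructor
  · intro hka
    have : k ∈ (Finset.range n).filter (· ∈ α) := Finset.mem_filter.mpr ⟨hkr, hka⟩
    rw [hfil] at this
    exact (Finset.mem_filter.mp this).2
  · intro hkb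
    have : k ∈ (Finset.range n).filter (· ∈ β) := Finset.mem_filter.mpr ⟨hkr, hkb⟩
    rw [← hfil] at this
    exact (Finset.mem_filter.mp this).2

end Fam

section Main

variable {S : Type*} [AddSemigroup S]

private lemma main_seq (hlwc : ∀ a b : S, {x : S | a + x = b}.Finite)
    (hni : ∀ s : S, s + s ≠ s) (A₀ : Set S) (U : Ultrafilter S) (hU : U + U = U)
    (hA₀ : A₀ ∈ U) :
    ∃ y : ℕ → S, FS y ⊆ A₀ ∧
      ∀ (F G : Finset ℕ) (hF : F.Nonempty) (hG : G.Nonempty),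
        ordSum y F = ordSum y G → F.max' hF = G.max' hG := by
  classical
  -- the states of the recursion
  let St := {CE : Set S × Finset S //
    CE.1 ∈ U ∧ CE.1 ⊆ A₀ ∧ ∀ s ∈ CE.1, {t | s + t ∈ CE.1} ∈ U}
  have hq0star : ∀ s ∈ A₀ ∩ {s | {t | s + t ∈ A₀} ∈ U},
      {t | s + t ∈ A₀ ∩ {s | {t | s + t ∈ A₀} ∈ U}} ∈ U := fun s hs => ufStar_star U hU hs
  let q0 : St := ⟨(A₀ ∩ {s | {t | s + t ∈ A₀} ∈ U}, ∅), ufStar_mem U hU hA₀,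
    Set.inter_subset_left, hq0star⟩
  have hstep' : ∀ q : St, ∃ p : S × St,
      p.1 ∈ q.1.1 ∧ p.1 ∉ q.1.2 ∧ (∀ a ∈ q.1.2, ∀ e ∈ q.1.2, a + p.1 ≠ e) ∧
      p.2.1.1 ⊆ q.1.1 ∧ (∀ t ∈ p.2.1.1, p.1 + t ∈ q.1.1) ∧
      p.2.1.2 = insert p.1 q.1.2 ∪ q.1.2.image (· + p.1) := by
    rintro ⟨⟨C, E⟩, hCU, hCA, hCstar⟩
    have hbad : ((↑E : Set S) ∪ ⋃ a ∈ E, ⋃ e ∈ E, {t | a + t = e}).Finite :=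
      (E.finite_toSet).union
        (Set.Finite.biUnion E.finite_toSet fun a _ =>
          Set.Finite.biUnion E.finite_toSet fun e _ => hlwc a e)
    obtain ⟨z, hzC, hzbad⟩ :=
      ((mem_uf_infinite U hU hni hCU).diff hbad).nonempty
    have hz1 : z ∉ (↑E : Set S) := fun h => hzbad (Set.mem_union_left _ h)
    have hz2 : ∀ a ∈ E, ∀ e ∈ E, a + z ≠ e := by
      intro a ha e he hc
      exact hzbad (Set.mem_union_right _
        (Set.mem_biUnion ha (Set.mem_biUnion he hc)))
    have hzC' : {t | z + t ∈ C} ∈ U := hCstar z hzC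
    refine ⟨(z, ⟨(C ∩ {t | z + t ∈ C}, insert z E ∪ E.image (· + z)),
      inter_mem hCU hzC', fun t ht => hCA ht.1, ?_⟩), hzC, hz1, hz2,
      Set.inter_subset_left, fun t ht => ht.2, rfl⟩
    -- star property of the new C
    intro s hs
    have h1 : {t | s + t ∈ C} ∈ U := hCstar s hs.1
    have h2 : {t | (z + s) + t ∈ C} ∈ U := hCstar (z + s) hs.2
    filter_upwards [h1, h2] with t ht1 ht2
    exact ⟨ht1, by simpa [add_assoc] using ht2⟩
  choose step hy hyE hyne hsub hshift hE using hstep'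
  obtain ⟨Q, hQ0, hQs⟩ : ∃ Q : ℕ → St, Q 0 = q0 ∧ ∀ n, Q (n+1) = (step (Q n)).2 :=
    ⟨fun n => Nat.rec q0 (fun _ q => (step q).2) n, rfl, fun _ => rfl⟩
  set y : ℕ → S := fun n => (step (Q n)).1 with hy_def
  set C : ℕ → Set S := fun n => (Q n).1.1 with hC_def
  set E : ℕ → Finset S := fun n => (Q n).1.2 with hE_def
  have hyC : ∀ n, y n ∈ C n := fun n => hy (Q n)
  have hCsub : ∀ n, C (n+1) ⊆ C n := by
    intro n
    show ((Q (n+1)).1).1 ⊆ ((Q n).1).1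
    rw [hQs n]
    exact hsub (Q n)
  have hCshift : ∀ n, ∀ t ∈ C (n+1), y n + t ∈ C n := by
    intro n
    show ∀ t ∈ ((Q (n+1)).1).1, (step (Q n)).1 + t ∈ ((Q n).1).1
    rw [hQs n]
    exact hshift (Q n)
  have hEsucc : ∀ n, E (n+1) = insert (y n) (E n) ∪ (E n).image (· + y n) := by
    intro n
    show ((Q (n+1)).1).2 = _
    rw [hQs n]
    exact hE (Q n)
  have hE0 : E 0 = ∅ := by
    show ((Q 0).1).2 = ∅
    rw [hQ0]
  have hCmono : ∀ m n, m ≤ n → C n ⊆ C m := by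
    intro m n h
    induction n, h using Nat.le_induction with
    | base => exact subset_rfl
    | succ k hk ih => exact (hCsub k).trans ih
  -- all finite sums with indices ≥ n lie in C n
  have claim2 : ∀ H : Finset ℕ, H.Nonempty → ∀ n, (∀ i ∈ H, n ≤ i) → ordSum y H ∈ C n := by
    intro H
    induction H using Finset.strongInduction with
    | _ H ih =>
      intro hne n hbd
      have haH := H.min'_mem hne
      set a := H.min' hne with ha
      by_cases he : H.erase a = ∅
      · have hH : H = {a} := by
          apply Finset.eq_singleton_iff_unique_mem.mpr
          exact ⟨haH, fun b hb => by
            by_contra hba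
            exact (Finset.ne_empty_of_mem (Finset.mem_erase.mpr ⟨hba, hb⟩)) he⟩
        rw [hH, ordSum_singleton]
        exact hCmono n a (hbd a haH) (hyC a)
      · have hee : (H.erase a).Nonempty := Finset.nonempty_iff_ne_empty.mpr he
        rw [ordSum_min_split y hne hee]
        have hin : ordSum y (H.erase a) ∈ C (a+1) := by
          apply ih (H.erase a) (Finset.erase_ssubset haH) hee
          intro i hi
          exact Nat.succ_le_of_lt (min_lt_of_mem_erase hne hi)
        exact hCmono n a (hbd a haH) (hCshift a _ hin)
  -- characterization of E n
  have claim3 : ∀ n (e : S),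
      e ∈ E n ↔ ∃ H : Finset ℕ, H.Nonempty ∧ H ⊆ Finset.range n ∧ e = ordSum y H := by
    intro n
    induction n with
    | zero =>
      intro e
      rw [hE0]
      simp only [Finset.notMem_empty, false_iff, not_exists]
      rintro H ⟨hne, hsub', rfl⟩
      simp at hsub'
      exact hne.ne_empty hsub'
    | succ n ihn =>
      intro e
      rw [hEsucc n]
      constructor
      · intro he
        rcases Finset.mem_union.mp he with he | he
        · rcases Finset.mem_insert.mp he with rfl | he
          · exact ⟨{n}, Finset.singleton_nonempty n, by simp, (ordSum_singleton y n).symm⟩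
          · obtain ⟨H, hne, hsub', rfl⟩ := (ihn e).mp he
            exact ⟨H, hne, hsub'.trans (Finset.range_subset_range.mpr n.le_succ), rfl⟩
        · obtain ⟨a, ha, rfl⟩ := Finset.mem_image.mp he
          obtain ⟨H, hne, hsub', rfl⟩ := (ihn a).mp ha
          refine ⟨insert n H, Finset.insert_nonempty n H, ?_, ?_⟩
          · intro i hi
            rcases Finset.mem_insert.mp hi with rfl | hi
            · exact Finset.self_mem_range_succ i
            · exact (Finset.range_subset_range.mpr n.le_succ) (hsub' hi)
          · exact (ordSum_insert_max y H hne n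
              (fun m hm => Finset.mem_range.mp (hsub' hm))).symm
      · rintro ⟨H, hne, hsub', rfl⟩
        by_cases hnH : n ∈ H
        · by_cases he : H.erase n = ∅
          · have hH : H = {n} := by
              apply Finset.eq_singleton_iff_unique_mem.mpr
              exact ⟨hnH, fun b hb => by
                by_contra hbn
                exact (Finset.ne_empty_of_mem (Finset.mem_erase.mpr ⟨hbn, hb⟩)) he⟩
            rw [hH, ordSum_singleton]
            exact Finset.mem_union_left _ (Finset.mem_insert_self _ _)
          · have hee : (H.erase n).Nonempty := Finset.nonempty_iff_ne_empty.mpr he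
            have hlt : ∀ m ∈ H.erase n, m < n := by
              intro m hm
              have h1 := Finset.mem_range.mp (hsub' (Finset.mem_of_mem_erase hm))
              have h2 := (Finset.mem_erase.mp hm).1
              omega
            have : ordSum y H = ordSum y (H.erase n) + y n := by
              conv_lhs => rw [← Finset.insert_erase hnH]
              exact ordSum_insert_max y _ hee n hlt
            rw [this]
            refine Finset.mem_union_right _ (Finset.mem_image.mpr
              ⟨ordSum y (H.erase n), ?_, rfl⟩)
            exact (ihn _).mpr ⟨H.erase n, hee, fun i hi =>
              Finset.mem_range.mpr (hlt i hi), rfl⟩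
        · refine Finset.mem_union_left _ (Finset.mem_insert_of_mem ?_)
          exact (ihn _).mpr ⟨H, hne, fun i hi => by
            have := Finset.mem_range.mp (hsub' hi)
            have : i ≠ n := fun h => hnH (h ▸ hi)
            exact Finset.mem_range.mpr (by omega), rfl⟩
  -- y n avoids all earlier sums
  have hyEn : ∀ n, y n ∉ E n := fun n => hyE (Q n)
  have hynen : ∀ n, ∀ a ∈ E n, ∀ e ∈ E n, a + y n ≠ e := fun n => hyne (Q n)
  -- key: different maxima give different sums
  have claim4 : ∀ (F G : Finset ℕ) (hF : F.Nonempty) (hG : G.Nonempty),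
      F.max' hF < G.max' hG → ordSum y F ≠ ordSum y G := by
    intro F G hF hG hlt heq
    set n := G.max' hG with hn
    have hFE : ordSum y F ∈ E n := by
      refine (claim3 n _).mpr ⟨F, hF, ?_, rfl⟩
      intro i hi
      exact Finset.mem_range.mpr (lt_of_le_of_lt (F.le_max' i hi) hlt)
    have hnG : n ∈ G := G.max'_mem hG
    by_cases he : G.erase n = ∅
    · have hG' : G = {n} := by
        apply Finset.eq_singleton_iff_unique_mem.mpr
        exact ⟨hnG, fun b hb => by
          by_contra hbn
          exact (Finset.ne_empty_of_mem (Finset.mem_erase.mpr ⟨hbn, hb⟩)) he⟩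
      rw [hG', ordSum_singleton] at heq
      exact hyEn n (heq ▸ hFE)
    · have hee : (G.erase n).Nonempty := Finset.nonempty_iff_ne_empty.mpr he
      have hlt' : ∀ m ∈ G.erase n, m < n := by
        intro m hm
        exact lt_of_le_of_ne (G.le_max' m (Finset.mem_of_mem_erase hm))
          (Finset.mem_erase.mp hm).1
      have hGs : ordSum y G = ordSum y (G.erase n) + y n := by
        conv_lhs => rw [← Finset.insert_erase hnG]
        exact ordSum_insert_max y _ hee n hlt'
      have haE : ordSum y (G.erase n) ∈ E n :=
        (claim3 n _).mpr ⟨G.erase n, hee, fun i hi => Finset.mem_range.mpr (hlt' i hi), rfl⟩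
      exact hynen n _ haE _ hFE (by rw [← hGs, heq])
  refine ⟨y, ?_, ?_⟩
  · rintro s ⟨H, hne, rfl⟩
    have h0 : ordSum y H ∈ C 0 := claim2 H hne 0 (fun i _ => Nat.zero_le i)
    have hsubA : C 0 ⊆ A₀ := by
      show ((Q 0).1).1 ⊆ A₀
      rw [hQ0]
      exact Set.inter_subset_left
    exact hsubA h0
  · intro F G hF hG heq
    by_contra hne
    rcases lt_or_gt_of_ne hne with h | h
    · exact claim4 F G hF hG h heq
    · exact claim4 G F hG hF h heq.symm

end Main

/-- If `(S,+)` is an infinite left weakly cancellative semigroup with no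
idempotent and `A` is an IP set in `S`, then `A` contains a family of `2^ℵ₀` almost
disjoint countably infinite IP subsets (indexed here by `Set ℕ`, a type of
cardinality `2^ℵ₀`). -/
theorem stmt3 {S : Type*} [AddSemigroup S] [Infinite S]
    (hlwc : ∀ a b : S, {x : S | a + x = b}.Finite)
    (hni : ∀ s : S, s + s ≠ s)
    (A : Set S) (hA : IPSet A) :
    ∃ B : Set ℕ → Set S,
      Function.Injective B ∧
      (∀ α, B α ⊆ A ∧ (B α).Countable ∧ (B α).Infinite ∧ IPSet (B α)) ∧
      (∀ α β, α ≠ β → (B α ∩ B β).Finite) := by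
  classical
  obtain ⟨x, hx⟩ := hA
  obtain ⟨U, hU, hxU⟩ := Hindman.exists_idempotent_ultrafilter_le_FS (x : Stream' S)
  set A₀ : Set S := {m | m ∈ Hindman.FS (x : Stream' S)} with hA₀def
  have hA₀U : A₀ ∈ U := hxU
  have hA₀A : A₀ ⊆ A := fun m hm => hx (hindmanFS_sub_FS x hm)
  obtain ⟨y, hyA₀, hmaxdet⟩ := main_seq hlwc hni A₀ U hU hA₀U
  -- y is injective
  have hyinj : Function.Injective y := by
    intro a b hab
    have h := hmaxdet {a} {b} (Finset.singleton_nonempty a) (Finset.singleton_nonempty b)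
      (by rw [ordSum_singleton, ordSum_singleton, hab])
    simpa using h
  -- the family
  have hsubA : ∀ α : Set ℕ, FS (fun k => y (fam α k)) ⊆ A := by
    intro α
    rintro s ⟨H, hne, rfl⟩
    rw [ordSum_image y (fam_strictMono α) H hne]
    exact hA₀A (hyA₀ ⟨H.image (fam α), hne.image _, rfl⟩)
  have hcnt : ∀ α : Set ℕ, (FS (fun k => y (fam α k))).Countable := by
    intro α
    apply Set.Countable.mono ?_ (Set.countable_range
      (fun H : Finset ℕ => ordSum (fun k => y (fam α k)) H))
    rintro s ⟨H, _, rfl⟩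
    exact ⟨H, rfl⟩
  have hinf : ∀ α : Set ℕ, (FS (fun k => y (fam α k))).Infinite := by
    intro α
    refine Set.infinite_of_injective_forall_mem
      (f := fun k : ℕ => y (fam α k)) ?_ ?_
    · exact fun a b hab => (fam_strictMono α).injective (hyinj hab)
    · intro k
      exact ⟨{k}, Finset.singleton_nonempty k,
        (ordSum_singleton (fun k => y (fam α k)) k).symm⟩
  have hfin : ∀ α β : Set ℕ, α ≠ β →
      (FS (fun k => y (fam α k)) ∩ FS (fun k => y (fam β k))).Finite := by
    intro α β hab
    obtain ⟨N, hN⟩ := (fam_almost_disjoint hab).bddAbove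
    apply Set.Finite.subset (Set.Finite.image (ordSum y)
      ((Finset.range (N+1)).powerset.finite_toSet))
    rintro s ⟨⟨F, hFne, rfl⟩, ⟨G, hGne, hG⟩⟩
    rw [ordSum_image y (fam_strictMono α) F hFne] at *
    rw [ordSum_image y (fam_strictMono β) G hGne] at hG
    set F' := F.image (fam α) with hF'
    set G' := G.image (fam β) with hG'
    have hF'ne : F'.Nonempty := hFne.image _
    have hG'ne : G'.Nonempty := hGne.image _
    have hmax : F'.max' hF'ne = G'.max' hG'ne := hmaxdet F' G' hF'ne hG'ne hG
    have hmF : F'.max' hF'ne ∈ Set.range (fam α) := by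
      obtain ⟨i, hi, hh⟩ := Finset.mem_image.mp (F'.max'_mem hF'ne)
      exact ⟨i, hh⟩
    have hmG : F'.max' hF'ne ∈ Set.range (fam β) := by
      rw [hmax]
      obtain ⟨i, hi, hh⟩ := Finset.mem_image.mp (G'.max'_mem hG'ne)
      exact ⟨i, hh⟩
    have hmN : F'.max' hF'ne ≤ N := hN ⟨hmF, hmG⟩
    refine ⟨F', ?_, rfl⟩
    simp only [Finset.mem_coe, Finset.mem_powerset]
    intro i hi
    exact Finset.mem_range.mpr (lt_of_le_of_lt (le_trans (F'.le_max' i hi) hmN)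
      (Nat.lt_succ_self N))
  refine ⟨fun α => FS (fun k => y (fam α k)), ?_, ?_, hfin⟩
  · -- injectivity
    intro α β hBe
    by_contra hne
    have h2 := hfin α β hne
    simp only at hBe
    rw [hBe, Set.inter_self] at h2
    exact hinf β h2
  · intro α
    exact ⟨hsubA α, hcnt α, hinf α, ⟨fun k => y (fam α k), subset_rfl⟩⟩
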